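/- Let x, y be non-commuting words with |y| ≤ |x|, both primitive, and not conjugate. Suppose p·(x·x)·s = x·y·x where p is a nonempty strict prefix of x and s a nonempty strict suffix of x, and this {x,y}-interpretation of x·x is disjoint and extendable. Then s·p = y and p·x = x·s. -/

import Mathlib

/-- `wpow u n` is the `n`-fold concatenation of the word `u` with itself. -/
def wpow {α : Type*} (u : List α) (n : ℕ) : List α := (List.replicate n u).flatten

/-- Primitivity: nonempty and not a proper power. -/
def Prim {α : Type*} (w : List α) : Prop := w ≠ [] ∧ ∀ (t : List α) (k : ℕ), 2 ≤ k → w ≠ wpow t k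

namespace SqAux

variable {α : Type*}

theorem wpow_zero (u : List α) : wpow u 0 = [] := rfl

theorem wpow_succ (u : List α) (k : ℕ) : wpow u (k+1) = u ++ wpow u k := by
  simp [wpow, List.replicate_succ]

theorem wpow_one (u : List α) : wpow u 1 = u := by simp [wpow]

theorem length_wpow (u : List α) (k : ℕ) : (wpow u k).length = k * u.length := by
  induction k with
  | zero => simp [wpow_zero]
  | succ k ih => rw [wpow_succ, List.length_append, ih, Nat.succ_mul]; omega

theorem wpow_add (u : List α) (k m : ℕ) : wpow u (k+m) = wpow u k ++ wpow u m := by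
  induction k with
  | zero => simp [wpow_zero]
  | succ k ih => rw [Nat.succ_add, wpow_succ, wpow_succ, ih, List.append_assoc]

theorem conj_wpow (u v : List α) (k : ℕ) : u ++ wpow (v ++ u) k = wpow (u ++ v) k ++ u := by
  induction k with
  | zero => simp [wpow_zero]
  | succ k ih =>
    rw [wpow_succ, wpow_succ]
    calc u ++ ((v ++ u) ++ wpow (v ++ u) k) = (u ++ v) ++ (u ++ wpow (v ++ u) k) := by
          simp [List.append_assoc]
      _ = (u ++ v) ++ (wpow (u ++ v) k ++ u) := by rw [ih]
      _ = ((u ++ v) ++ wpow (u ++ v) k) ++ u := by simp [List.append_assoc]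

theorem wpow_mul (u : List α) (m k : ℕ) : wpow (wpow u m) k = wpow u (k*m) := by
  induction k with
  | zero => simp [wpow_zero]
  | succ k ih => rw [wpow_succ, ih, show (k+1)*m = m + k*m by ring, wpow_add]

theorem comm_pow : ∀ (N : ℕ) (u v : List α), u.length + v.length ≤ N → u ≠ [] → v ≠ [] →
    u ++ v = v ++ u → ∃ (t : List α) (i j : ℕ), 0 < i ∧ 0 < j ∧ u = wpow t i ∧ v = wpow t j := by
  intro N
  induction N with
  | zero =>
    intro u v hN hu _ _
    exact absurd (List.length_eq_zero_iff.mp (by omega)) hu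
  | succ N ih =>
    intro u v hN hu hv huv
    rcases Nat.le_total u.length v.length with hle | hle
    · have hu' : u = v.take u.length := by
        have := congrArg (List.take u.length) huv
        rwa [List.take_left' rfl, List.take_append_of_le_length hle] at this
      have hv' : v = u ++ v.drop u.length := by
        nth_rw 1 [← List.take_append_drop u.length v, ← hu']
      rcases Classical.em (v.drop u.length = []) with hnil | hnil
      · refine ⟨u, 1, 1, one_pos, one_pos, (wpow_one u).symm, ?_⟩
        rw [hv', hnil, List.append_nil, wpow_one]
      · have hcomm' : u ++ v.drop u.length = v.drop u.length ++ u := by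
          have : u ++ (u ++ v.drop u.length) = (u ++ v.drop u.length) ++ u := by
            rw [← hv', huv, hv']
          rw [List.append_assoc] at this
          exact List.append_cancel_left this
        have hlen' : u.length + (v.drop u.length).length ≤ N := by
          have h1 : 0 < u.length := List.length_pos_iff.mpr hu
          have : (v.drop u.length).length = v.length - u.length := List.length_drop
          omega
        obtain ⟨t, i, j, hi, hj, hut, hvt⟩ := ih u (v.drop u.length) hlen' hu hnil hcomm'
        exact ⟨t, i, i + j, hi, by omega, hut, by rw [hv', hvt, hut, wpow_add]⟩
    · have hv' : v = u.take v.length := by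
        have := congrArg (List.take v.length) huv.symm
        rwa [List.take_left' rfl, List.take_append_of_le_length hle] at this
      have hu' : u = v ++ u.drop v.length := by
        nth_rw 1 [← List.take_append_drop v.length u, ← hv']
      rcases Classical.em (u.drop v.length = []) with hnil | hnil
      · refine ⟨v, 1, 1, one_pos, one_pos, ?_, (wpow_one v).symm⟩
        rw [hu', hnil, List.append_nil, wpow_one]
      · have hcomm' : v ++ u.drop v.length = u.drop v.length ++ v := by
          have : v ++ (v ++ u.drop v.length) = (v ++ u.drop v.length) ++ v := by
            rw [← hu', huv.symm, hu']
          rw [List.append_assoc] at this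
          exact List.append_cancel_left this
        have hlen' : v.length + (u.drop v.length).length ≤ N := by
          have h1 : 0 < v.length := List.length_pos_iff.mpr hv
          have : (u.drop v.length).length = u.length - v.length := List.length_drop
          omega
        obtain ⟨t, i, j, hi, hj, hvt, hut⟩ := ih v (u.drop v.length) hlen' hv hnil hcomm'
        exact ⟨t, i + j, i, by omega, hi, by rw [hu', hut, hvt, wpow_add], hvt⟩


def Per (x : List α) (q : ℕ) : Prop := ∀ i, i + q < x.length → x[i]? = x[i+q]?

theorem per_iter {x : List α} {q : ℕ} (h : Per x q) :
    ∀ (k i : ℕ), i + k*q < x.length → x[i]? = x[i + k*q]? := by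
  intro k
  induction k with
  | zero => intro i _; simp
  | succ k ih =>
    intro i hi
    have hsm : (k+1)*q = k*q + q := Nat.succ_mul k q
    have h1 : i + k*q < x.length := by omega
    have h2 : (i + k*q) + q < x.length := by omega
    rw [ih i h1, h (i + k*q) h2]
    congr 1
    omega

theorem per_mod {x : List α} {d : ℕ} (h : Per x d) {i : ℕ} (hi : i < x.length) :
    x[i]? = x[i % d]? := by
  have h1 : i % d + (i/d)*d = i := by
    have h2 := Nat.mod_add_div i d
    have h3 : (i/d)*d = d*(i/d) := Nat.mul_comm _ _
    omega
  have h4 := per_iter h (i/d) (i % d) (by omega)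
  rw [h1] at h4
  exact h4.symm

theorem per_sub {x : List α} {a b : ℕ} (ha : Per x a) (hb : Per x b) (hab : a ≤ b)
    (hn : a + b ≤ x.length) : Per x (b - a) := by
  intro i hi
  rcases Nat.lt_or_ge (i + b) x.length with h1 | h1
  · have e1 := hb i h1
    have e2 := ha (i + (b - a)) (by omega)
    rw [e1, e2]
    congr 1
    omega
  · have e1 := ha (i - a) (by omega)
    have e2 := hb (i - a) (by omega)
    rw [show i - a + a = i by omega] at e1
    rw [show i - a + b = i + (b - a) by omega] at e2
    exact e1.symm.trans e2

theorem fw {x : List α} (a b : ℕ) (ha : Per x a) (hb : Per x b) (hn : a + b ≤ x.length) :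
    Per x (Nat.gcd a b) := by
  have H : ∀ M a b, a + b ≤ M → Per x a → Per x b → a + b ≤ x.length → Per x (Nat.gcd a b) := by
    intro M
    induction M with
    | zero =>
      intro a b hM ha hb hn
      have ha0 : a = 0 := by omega
      have hb0 : b = 0 := by omega
      subst ha0; subst hb0
      simpa using ha
    | succ M ih =>
      intro a b hM ha hb hn
      rcases Nat.eq_zero_or_pos a with rfl | hap
      · simpa using hb
      rcases Nat.eq_zero_or_pos b with rfl | hbp
      · simpa using ha
      rcases Nat.le_total a b with h | h
      · have hsub := per_sub ha hb h hn
        have := ih a (b - a) (by omega) ha hsub (by omega)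
        rwa [Nat.gcd_sub_self_right h] at this
      · have hsub := per_sub hb ha h (by omega)
        have := ih (a - b) b (by omega) hsub hb (by omega)
        rwa [Nat.gcd_sub_self_left h] at this
  exact H (a+b) a b le_rfl ha hb hn

theorem getElem?_wpow (u : List α) : ∀ (k i : ℕ), i < k * u.length → (wpow u k)[i]? = u[i % u.length]? := by
  intro k
  induction k with
  | zero => intro i hi; simp at hi
  | succ k ih =>
    intro i hi
    rw [wpow_succ]
    rcases Nat.lt_or_ge i u.length with h | h
    · rw [List.getElem?_append_left h, Nat.mod_eq_of_lt h]
    · have hi' : i - u.length < k * u.length := by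
        rw [Nat.succ_mul] at hi; omega
      rw [List.getElem?_append_right h, ih _ hi', Nat.mod_eq_sub_mod h]

theorem take_eq_wpow {x : List α} {d k : ℕ} (hd : 0 < d) (h : Per x d) (hk : k * d ≤ x.length) :
    x.take (k*d) = wpow (x.take d) k := by
  rcases Nat.eq_zero_or_pos k with rfl | hkp
  · simp [wpow_zero]
  have hdn : d ≤ x.length := le_trans (Nat.le_mul_of_pos_left d hkp) hk
  have htd : (x.take d).length = d := by rw [List.length_take]; omega
  apply List.ext_getElem?
  intro i
  rcases Nat.lt_or_ge i (k*d) with hik | hik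
  · rw [List.getElem?_take_of_lt hik]
    rw [getElem?_wpow (x.take d) k i (by rw [htd]; exact hik)]
    rw [htd]
    rw [List.getElem?_take_of_lt (Nat.mod_lt i hd)]
    exact per_mod h (lt_of_lt_of_le hik hk)
  · have e1 : (x.take (k*d))[i]? = none := List.getElem?_eq_none (by rw [List.length_take]; omega)
    have e2 : (wpow (x.take d) k)[i]? = none :=
      List.getElem?_eq_none (by rw [length_wpow, htd]; exact hik)
    rw [e1, e2]

theorem drop_eq_take_mod {x : List α} {d : ℕ} (hd : 0 < d) (h : Per x d) :
    x.drop ((x.length / d) * d) = x.take (x.length % d) := by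
  have hqd : (x.length / d) * d + x.length % d = x.length := by
    have h2 := Nat.mod_add_div x.length d
    have h3 : (x.length/d)*d = d*(x.length/d) := Nat.mul_comm _ _
    omega
  have hmd : x.length % d < d := Nat.mod_lt _ hd
  apply List.ext_getElem?
  intro i
  rcases Nat.lt_or_ge i (x.length % d) with hik | hik
  · rw [List.getElem?_drop, List.getElem?_take_of_lt hik]
    have hper := per_mod h (i := (x.length/d)*d + i) (by omega)
    rw [hper, show x.length / d * d + i = i + (x.length/d)*d by omega, Nat.add_mul_mod_self_right, Nat.mod_eq_of_lt (by omega)]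
  · have e1 : (x.drop ((x.length/d)*d))[i]? = none :=
      List.getElem?_eq_none (by rw [List.length_drop]; omega)
    have e2 : (x.take (x.length % d))[i]? = none :=
      List.getElem?_eq_none (by rw [List.length_take]; omega)
    rw [e1, e2]


theorem wpow_prefix (u : List α) {k : ℕ} (hk : 1 ≤ k) : u <+: wpow u k := by
  rw [show k = 1 + (k-1) by omega, wpow_add, wpow_one]
  exact List.prefix_append u _

theorem wpow_suffix (u : List α) {k : ℕ} (hk : 1 ≤ k) : u <:+ wpow u k := by
  rw [show k = (k-1) + 1 by omega, wpow_add, wpow_one]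
  exact List.suffix_append _ u

theorem pref_eq {u v L : List α} (hu : u <+: L) (hv : v <+: L) (h : u.length = v.length) :
    u = v :=
  (List.prefix_of_prefix_length_le hu hv (le_of_eq h)).eq_of_length h

theorem suf_eq {u v L : List α} (hu : u <:+ L) (hv : v <:+ L) (h : u.length = v.length) :
    u = v :=
  (List.suffix_of_suffix_length_le hu hv (le_of_eq h)).eq_of_length h

theorem suffix_wpow (z₁ z₂ : List α) (q k : ℕ) (hkq : k ≤ q) :
    wpow (z₁ ++ z₂) q ++ z₁ = (wpow (z₁ ++ z₂) (q-k) ++ z₁) ++ wpow (z₂ ++ z₁) k := by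
  have h1 : wpow (z₁++z₂) (q-k) ++ wpow (z₁++z₂) k = wpow (z₁++z₂) q := by
    rw [← wpow_add, Nat.sub_add_cancel hkq]
  calc wpow (z₁++z₂) q ++ z₁ = (wpow (z₁++z₂) (q-k) ++ wpow (z₁++z₂) k) ++ z₁ := by rw [h1]
    _ = wpow (z₁++z₂) (q-k) ++ (wpow (z₁++z₂) k ++ z₁) := by rw [List.append_assoc]
    _ = wpow (z₁++z₂) (q-k) ++ (z₁ ++ wpow (z₂++z₁) k) := by rw [conj_wpow]
    _ = (wpow (z₁++z₂) (q-k) ++ z₁) ++ wpow (z₂++z₁) k := by rw [List.append_assoc]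

end SqAux

open SqAux in
/-- The disjoint extendable `{x,y}`-interpretation `p (x·x) s ∼ [x,y,x]` of the square `x·x`
satisfies `s·p = y` and `p·x = x·s`. -/
theorem sq_ext_interp {α : Type*} (x y p s : List α)
    (hcomm : x ++ y ≠ y ++ x) (hlen : y.length ≤ x.length)
    (hx : Prim x) (hy : Prim y)
    (hconj : ¬ ∃ r q : List α, x = r ++ q ∧ y = q ++ r)
    (heq : p ++ (x ++ x) ++ s = x ++ y ++ x)
    (hpne : p ≠ []) (hp : p <+: x ∧ p ≠ x)
    (hsne : s ≠ []) (hs : s <:+ x ∧ s ≠ x)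
    (hdisj : ∀ w' u' : List (List α), w' <+: [x, y, x] → u' <+: [x, x] →
      w'.flatten ≠ p ++ u'.flatten)
    (hext : (∃ wp : List (List α), (∀ a ∈ wp, a = x ∨ a = y) ∧ p <:+ wp.flatten) ∧
            (∃ ws : List (List α), (∀ a ∈ ws, a = x ∨ a = y) ∧ s <+: ws.flatten)) :
    s ++ p = y ∧ p ++ x = x ++ s := by
  classical
  have hap : 0 < p.length := List.length_pos_iff.mpr hpne
  have hbp : 0 < s.length := List.length_pos_iff.mpr hsne
  have hyl : y.length = p.length + s.length := by
    have := congrArg List.length heq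
    simp [List.length_append] at this
    omega
  have han : p.length ≤ x.length := hp.1.length_le
  have hbn : s.length ≤ x.length := hs.1.length_le
  have haltn : p.length < x.length := by
    rcases Nat.lt_or_ge p.length x.length with h | h
    · exact h
    · exact absurd (hp.1.eq_of_length (by omega)) hp.2
  have hbltn : s.length < x.length := by
    rcases Nat.lt_or_ge s.length x.length with h | h
    · exact h
    · exact absurd (hs.1.eq_of_length (by omega)) hs.2
  have habn : p.length + s.length ≤ x.length := by omega
  -- periods
  have hpa : Per x p.length := by
    have hpre1 : p ++ x <+: x ++ y ++ x := ⟨x ++ s, by rw [← heq]; simp [List.append_assoc]⟩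
    have hpre2 : x <+: x ++ y ++ x := ⟨y ++ x, by simp [List.append_assoc]⟩
    have hxpx : x <+: p ++ x :=
      List.prefix_of_prefix_length_le hpre2 hpre1 (by rw [List.length_append]; omega)
    obtain ⟨t1, ht1⟩ := hxpx
    intro i hi
    calc x[i]? = (p ++ x)[i + p.length]? := by
          rw [List.getElem?_append_right (by omega)]
          congr 1
          omega
      _ = (x ++ t1)[i + p.length]? := by rw [ht1]
      _ = x[i + p.length]? := List.getElem?_append_left hi
  have hpb : Per x s.length := by
    have hsuf1 : x ++ s <:+ x ++ y ++ x := ⟨p ++ x, by rw [← heq]; simp [List.append_assoc]⟩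
    have hsuf2 : x <:+ x ++ y ++ x := ⟨x ++ y, rfl⟩
    have hxxs : x <:+ x ++ s :=
      List.suffix_of_suffix_length_le hsuf2 hsuf1 (by rw [List.length_append]; omega)
    obtain ⟨t2, ht2⟩ := hxxs
    have ht2l : t2.length = s.length := by
      have := congrArg List.length ht2
      simp [List.length_append] at this
      omega
    intro i hi
    calc x[i]? = (t2 ++ x)[i + s.length]? := by
          rw [List.getElem?_append_right (by omega)]
          congr 1
          omega
      _ = (x ++ s)[i + s.length]? := by rw [ht2]
      _ = x[i + s.length]? := List.getElem?_append_left hi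
  -- gcd period
  obtain ⟨d, hd_def⟩ : ∃ d, d = Nat.gcd p.length s.length := ⟨_, rfl⟩
  have hd0 : 0 < d := hd_def ▸ Nat.gcd_pos_of_pos_left _ hap
  have hper : Per x d := hd_def ▸ fw p.length s.length hpa hpb habn
  have hda : d ∣ p.length := hd_def ▸ Nat.gcd_dvd_left _ _
  have hdb : d ∣ s.length := hd_def ▸ Nat.gcd_dvd_right _ _
  have hda' : d ≤ p.length := Nat.le_of_dvd hap hda
  have hdb' : d ≤ s.length := Nat.le_of_dvd hbp hdb
  -- structure of x
  obtain ⟨q, hq_def⟩ : ∃ q, q = x.length / d := ⟨_, rfl⟩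
  obtain ⟨r, hr_def⟩ : ∃ r, r = x.length % d := ⟨_, rfl⟩
  obtain ⟨z, hz_def⟩ : ∃ z, z = x.take d := ⟨_, rfl⟩
  have hnqd : x.length = q * d + r := by
    have h1 := Nat.div_add_mod x.length d
    rw [← hq_def, ← hr_def] at h1
    have h2 : d * q = q * d := Nat.mul_comm _ _
    omega
  have hrd : r < d := hr_def ▸ Nat.mod_lt _ hd0
  have hqd_le : q * d ≤ x.length := by omega
  have hlz : z.length = d := by rw [hz_def, List.length_take]; omega
  have M1 : x = wpow z q ++ x.take r := by
    have h1 := List.take_append_drop (q*d) x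
    have h2 : x.take (q*d) = wpow (x.take d) q := take_eq_wpow hd0 hper hqd_le
    have h3 : x.drop (q*d) = x.take r := by
      rw [hq_def, hr_def]
      exact drop_eq_take_mod hd0 hper
    rw [hq_def] at h2
    rw [← hz_def] at h2
    rw [← hq_def] at h2
    rw [h2, h3] at h1
    exact h1.symm
  have hq2 : 2 ≤ q := by
    by_contra hq
    have h1 : q * d ≤ 1 * d := Nat.mul_le_mul_right d (by omega)
    rw [Nat.one_mul] at h1
    omega
  have hr0 : 0 < r := by
    by_contra h0
    have hr00 : r = 0 := by omega
    have hxq : x = wpow z q := by rw [M1, hr00]; simp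
    exact hx.2 z q hq2 hxq
  obtain ⟨z₁, hz1_def⟩ : ∃ z₁, z₁ = x.take r := ⟨_, rfl⟩
  obtain ⟨z₂, hz2_def⟩ : ∃ z₂, z₂ = z.drop r := ⟨_, rfl⟩
  have hlz1 : z₁.length = r := by rw [hz1_def, List.length_take]; omega
  have hlz2 : z₂.length = d - r := by rw [hz2_def, List.length_drop, hlz]
  have hz_eq : z = z₁ ++ z₂ := by
    have htr : List.take r z = List.take r x := by
      rw [hz_def, List.take_take, Nat.min_eq_left (le_of_lt hrd)]
    rw [hz1_def, hz2_def, ← htr, List.take_append_drop]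
  obtain ⟨w, hw_def⟩ : ∃ w, w = z₂ ++ z₁ := ⟨_, rfl⟩
  have hlw : w.length = d := by rw [hw_def, List.length_append]; omega
  rw [← hz1_def] at M1
  -- z ≠ w
  have hzw : z ≠ w := by
    intro hzweq
    have hcomm12 : z₁ ++ z₂ = z₂ ++ z₁ := by rw [← hz_eq, hzweq, hw_def]
    obtain ⟨t, i, j, hi, hj, ht1, ht2⟩ :=
      comm_pow (z₁.length + z₂.length) z₁ z₂ le_rfl
        (by intro h; rw [h] at hlz1; simp at hlz1; omega)
        (by intro h; rw [h] at hlz2; simp at hlz2; omega) hcomm12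
    have hzt : z = wpow t (i + j) := by rw [hz_eq, ht1, ht2, wpow_add]
    have hxt : x = wpow t (q * (i + j) + i) := by
      rw [M1, hzt, wpow_mul, ht1, wpow_add]
    have h2 : 2 ≤ q * (i + j) + i := by
      have : 2 * 1 ≤ q * (i + j) := Nat.mul_le_mul (by omega) (by omega)
      omega
    exact hx.2 t _ h2 hxt
  -- exponents
  obtain ⟨A, hA_def⟩ : ∃ A, A = p.length / d := ⟨_, rfl⟩
  obtain ⟨B, hB_def⟩ : ∃ B, B = s.length / d := ⟨_, rfl⟩
  have hAd : A * d = p.length := by rw [hA_def]; exact Nat.div_mul_cancel hda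
  have hBd : B * d = s.length := by rw [hB_def]; exact Nat.div_mul_cancel hdb
  have hA1 : 1 ≤ A := by
    by_contra h
    have hA0 : A = 0 := by omega
    rw [hA0] at hAd
    omega
  have hB1 : 1 ≤ B := by
    by_contra h
    have hB0 : B = 0 := by omega
    rw [hB0] at hBd
    omega
  have hAq : A ≤ q := by
    by_contra h
    have h1 : (q+1) * d ≤ A * d := Nat.mul_le_mul_right d (by omega)
    rw [Nat.succ_mul] at h1
    omega
  have hBq : B ≤ q := by
    by_contra h
    have h1 : (q+1) * d ≤ B * d := Nat.mul_le_mul_right d (by omega)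
    rw [Nat.succ_mul] at h1
    omega
  -- formulas for p, s, prefixes, suffixes
  have hP : p = wpow z A := by
    have h1 := List.prefix_iff_eq_take.mp hp.1
    have h2 : x.take (A*d) = wpow (x.take d) A := take_eq_wpow hd0 hper (by omega)
    rw [hAd, ← hz_def] at h2
    exact h1.trans h2
  have htb : x.take s.length = wpow z B := by
    have h2 : x.take (B*d) = wpow (x.take d) B := take_eq_wpow hd0 hper (by omega)
    rw [hBd, ← hz_def] at h2
    exact h2
  have hdropgen : ∀ k : ℕ, k ≤ q → x.drop (x.length - k * d) = wpow w k := by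
    intro k hkq
    have hdec := suffix_wpow z₁ z₂ q k hkq
    rw [← hz_eq, ← hw_def, ← M1] at hdec
    have hlen1 : x.length - k * d = (wpow z (q-k) ++ z₁).length := by
      rw [List.length_append, length_wpow, hlz, hlz1]
      have hsm : (q - k) * d = q * d - k * d := Nat.sub_mul q k d
      have h1 : k * d ≤ q * d := Nat.mul_le_mul_right d hkq
      omega
    rw [hlen1, hdec]
    exact List.drop_left' rfl
  have hS : s = wpow w B := by
    have h1 := List.suffix_iff_eq_drop.mp hs.1
    rw [h1, ← hBd]
    exact hdropgen B hBq
  have hdropa : x.drop (x.length - p.length) = wpow w A := by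
    rw [← hAd]
    exact hdropgen A hAq
  -- x ++ s and x ++ w^A
  have hxs : x ++ s = wpow z (q + B) ++ z₁ := by
    rw [M1, hS, hw_def, List.append_assoc, conj_wpow, ← hz_eq, ← List.append_assoc,
      ← wpow_add]
  have hcA : x ++ wpow w A = wpow z (q + A) ++ z₁ := by
    rw [M1, hw_def, List.append_assoc, conj_wpow, ← hz_eq, ← List.append_assoc, ← wpow_add]
  -- y formula
  have hY : y = wpow w A ++ wpow z B := by
    have hL : p ++ (x ++ x) ++ s = (wpow z (q+A) ++ z₁) ++ (wpow z (q+B) ++ z₁) := by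
      calc p ++ (x ++ x) ++ s = p ++ (x ++ (x ++ s)) := by simp [List.append_assoc]
        _ = wpow z A ++ ((wpow z q ++ z₁) ++ (wpow z (q + B) ++ z₁)) := by rw [hxs, hP, M1]
        _ = (wpow z A ++ wpow z q) ++ (z₁ ++ (wpow z (q + B) ++ z₁)) := by
            simp [List.append_assoc]
        _ = wpow z (A + q) ++ (z₁ ++ (wpow z (q + B) ++ z₁)) := by rw [← wpow_add]
        _ = (wpow z (q+A) ++ z₁) ++ (wpow z (q+B) ++ z₁) := by
            rw [Nat.add_comm A q]
            simp [List.append_assoc]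
    have hR : x ++ (wpow w A ++ wpow z B) ++ x = (wpow z (q+A) ++ z₁) ++ (wpow z (q+B) ++ z₁) := by
      calc x ++ (wpow w A ++ wpow z B) ++ x = (x ++ wpow w A) ++ (wpow z B ++ x) := by
            simp [List.append_assoc]
        _ = (wpow z (q+A) ++ z₁) ++ (wpow z B ++ (wpow z q ++ z₁)) := by rw [hcA, M1]
        _ = (wpow z (q+A) ++ z₁) ++ (wpow z (B+q) ++ z₁) := by
            rw [← List.append_assoc (wpow z B), ← wpow_add]
        _ = (wpow z (q+A) ++ z₁) ++ (wpow z (q+B) ++ z₁) := by rw [Nat.add_comm B q]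
    have key : x ++ y ++ x = x ++ (wpow w A ++ wpow z B) ++ x := by
      rw [← heq, hL, hR]
    have h1 : x ++ y = x ++ (wpow w A ++ wpow z B) := List.append_cancel_right key
    exact List.append_cancel_left h1
  -- extendability: s-side gives s.length ≤ p.length
  obtain ⟨⟨wp, hwpmem, hwpsuf⟩, ⟨ws, hwsmem, hwspre⟩⟩ := hext
  have hba : s.length ≤ p.length := by
    rcases ws with _ | ⟨h0, t0⟩
    · simp at hwspre
      exact absurd hwspre hsne
    · rw [List.flatten_cons] at hwspre
      have hh0 := hwsmem h0 List.mem_cons_self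
      have hsy : s.length ≤ h0.length → s <+: h0 := fun hl =>
        List.prefix_of_prefix_length_le hwspre (List.prefix_append h0 t0.flatten) hl
      rcases hh0 with h | h
      · subst h
        have hsx : s <+: h0 := hsy (by omega)
        have h1 : s = h0.take s.length := List.prefix_iff_eq_take.mp hsx
        rw [htb] at h1
        have h2 : wpow w B = wpow z B := hS.symm.trans h1
        have h3 : w <+: wpow z B := by
          have := wpow_prefix w hB1
          rwa [h2] at this
        have hwz : w = z := pref_eq h3 (wpow_prefix z hB1) (by rw [hlw, hlz])
        exact absurd hwz.symm hzw
      · subst h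
        by_contra hab
        have hAB : A < B := by
          by_contra hcon
          have : B * d ≤ A * d := Nat.mul_le_mul_right d (by omega)
          omega
        have hsy' : s <+: h0 := hsy (by omega)
        have hsplit : wpow w B = wpow w A ++ wpow w (B - A) := by
          rw [← wpow_add]
          congr 1
          omega
        rw [hS, hY, hsplit] at hsy'
        obtain ⟨tt, htt⟩ := hsy'
        rw [List.append_assoc] at htt
        have h3 : wpow w (B-A) ++ tt = wpow z B := List.append_cancel_left htt
        have h4 : w <+: wpow z B :=
          (wpow_prefix w (k := B - A) (by omega)).trans ⟨tt, h3⟩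
        have hwz : w = z := pref_eq h4 (wpow_prefix z hB1) (by rw [hlw, hlz])
        exact absurd hwz.symm hzw
  -- extendability: p-side gives p.length ≤ s.length
  have hab : p.length ≤ s.length := by
    rcases List.eq_nil_or_concat wp with h | ⟨L, h0, h⟩
    · rw [h] at hwpsuf
      simp at hwpsuf
      exact absurd hwpsuf hpne
    · have hfl : (L ++ [h0]).flatten = L.flatten ++ h0 := by simp
      rw [h, List.concat_eq_append, hfl] at hwpsuf
      have hh0 := hwpmem h0 (by rw [h]; simp)
      have hpy : p.length ≤ h0.length → p <:+ h0 := fun hl =>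
        List.suffix_of_suffix_length_le hwpsuf (List.suffix_append L.flatten h0) hl
      rcases hh0 with hc | hc
      · subst hc
        have hpx : p <:+ h0 := hpy (by omega)
        have h1 : p = h0.drop (h0.length - p.length) := List.suffix_iff_eq_drop.mp hpx
        rw [hdropa] at h1
        have h2 : wpow z A = wpow w A := hP.symm.trans h1
        have h3 : z <+: wpow w A := by
          have := wpow_prefix z hA1
          rwa [h2] at this
        have hwz : z = w := pref_eq h3 (wpow_prefix w hA1) (by rw [hlw, hlz])
        exact absurd hwz hzw
      · subst hc
        by_contra hab2
        have hBA : B < A := by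
          by_contra hcon
          have : A * d ≤ B * d := Nat.mul_le_mul_right d (by omega)
          omega
        have hpy' : p <:+ h0 := hpy (by omega)
        have hsplit : wpow z A = wpow z (A - B) ++ wpow z B := by
          rw [← wpow_add]
          congr 1
          omega
        rw [hP, hY, hsplit] at hpy'
        obtain ⟨tt, htt⟩ := hpy'
        rw [← List.append_assoc] at htt
        have h3 : tt ++ wpow z (A-B) = wpow w A := List.append_cancel_right htt
        have h4 : z <:+ wpow w A :=
          (wpow_suffix z (k := A - B) (by omega)).trans ⟨tt, h3⟩
        have hwz : z = w := suf_eq h4 (wpow_suffix w hA1) (by rw [hlw, hlz])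
        exact absurd hwz hzw
  have hABe : A = B := Nat.eq_of_mul_eq_mul_right hd0 (by omega)
  constructor
  · rw [hS, hP, hY, hABe]
  · rw [hP, hxs, M1, ← List.append_assoc, ← wpow_add, hABe, Nat.add_comm B q]
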